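/- Suppose N_e, N_p > 0 satisfy the strict ratio condition (1 − G m_p²/q²)/(1 + G m_e m_p/q²) < N_e/N_p < (1 + G m_e m_p/q²)/(1 − G m_e²/q²). Then there exist a constant e < 0 and R₁ > 0 such that for every R ≥ R₁, every minimizer (ρ_e^R, ρ_p^R) of the energy E over W_R satisfies E(ρ_e^R, ρ_p^R) ≤ e. -/

import Mathlib

open MeasureTheory Set

noncomputable section

abbrev Sp := EuclideanSpace ℝ (Fin 3)

/-- Radial symmetry of a density on `ℝ³`. -/
def Radial (ρ : Sp → ℝ) : Prop := ∀ x y : Sp, ‖x‖ = ‖y‖ → ρ x = ρ y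

/-- The double integral `∬ f(x) g(y) / |x - y| dx dy`. -/
def dblInt (f g : Sp → ℝ) : ℝ := ∫ x : Sp, ∫ y : Sp, f x * g y / ‖x - y‖

/-- The two-species Thomas–Fermi energy functional with nonrelativistic kinetic energy. -/
def energy (ke kp q G me mp : ℝ) (ρe ρp : Sp → ℝ) : ℝ :=
  ke * (∫ x : Sp, ρe x ^ ((5:ℝ)/3)) + kp * (∫ x : Sp, ρp x ^ ((5:ℝ)/3))
    + q ^ 2 / 2 * dblInt (fun x => ρp x - ρe x) (fun x => ρp x - ρe x)
    - G / 2 * dblInt (fun x => mp * ρp x + me * ρe x) (fun x => mp * ρp x + me * ρe x)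

/-- The set `W_R`: pairs of nonnegative radially symmetric (measurable, integrable)
functions with `∫ρ_e = N_e`, `∫ρ_p = N_p`, vanishing outside the ball of radius `R`
and bounded by `R` almost everywhere. -/
def InWR (Ne Np R : ℝ) (ρe ρp : Sp → ℝ) : Prop :=
  Measurable ρe ∧ Measurable ρp ∧ (∀ x, 0 ≤ ρe x) ∧ (∀ x, 0 ≤ ρp x) ∧
  Radial ρe ∧ Radial ρp ∧ Integrable ρe ∧ Integrable ρp ∧
  (∫ x : Sp, ρe x) = Ne ∧ (∫ x : Sp, ρp x) = Np ∧
  (∀ x : Sp, R < ‖x‖ → ρe x = 0) ∧ (∀ x : Sp, R < ‖x‖ → ρp x = 0) ∧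
  (∀ᵐ x : Sp, ρe x ≤ R) ∧ (∀ᵐ x : Sp, ρp x ≤ R)


open Metric Filter ENNReal

lemma sp_finrank : Module.finrank ℝ Sp = 3 := by
  simp [finrank_euclideanSpace_fin]


lemma riesz_integrable {r : ℝ} (hr : 0 < r) :
    Integrable (fun z : Sp => (closedBall (0:Sp) r).indicator (fun _ => (1:ℝ)) z / ‖z‖) := by
  set f : Sp → ℝ := fun z => (closedBall (0:Sp) r).indicator (fun _ => (1:ℝ)) z / ‖z‖ with hf
  have hmeas : Measurable f :=
    (measurable_const.indicator measurableSet_closedBall).div measurable_norm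
  have hnn : ∀ z, 0 ≤ f z := fun z =>
    div_nonneg (Set.indicator_nonneg (fun _ _ => zero_le_one) z) (norm_nonneg z)
  refine ⟨hmeas.aestronglyMeasurable, ?_⟩
  rw [hasFiniteIntegral_iff_ofReal (ae_of_all _ hnn)]
  rw [lintegral_eq_lintegral_meas_le volume (ae_of_all _ hnn) hmeas.aemeasurable]
  have key : ∀ t : ℝ, 0 < t → {z : Sp | t ≤ f z} ⊆ closedBall 0 r ∩ closedBall 0 t⁻¹ := by
    intro t ht z hz
    simp only [mem_setOf_eq, hf] at hz
    have hzB : z ∈ closedBall (0:Sp) r := by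
      by_contra hzB
      rw [Set.indicator_of_notMem hzB, zero_div] at hz
      exact absurd (ht.trans_le hz) (lt_irrefl 0)
    rw [Set.indicator_of_mem hzB] at hz
    refine ⟨hzB, ?_⟩
    rw [mem_closedBall_zero_iff]
    rcases eq_or_lt_of_le (norm_nonneg z) with h0 | h0
    · rw [← h0]; positivity
    · rw [one_div] at hz
      calc ‖z‖ = (‖z‖⁻¹)⁻¹ := (inv_inv _).symm
        _ ≤ t⁻¹ := by exact inv_anti₀ ht hz
  calc ∫⁻ t in Ioi (0:ℝ), volume {z : Sp | t ≤ f z}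
      ≤ ∫⁻ t in Ioc (0:ℝ) r⁻¹ ∪ Ioi r⁻¹, volume {z : Sp | t ≤ f z} :=
        lintegral_mono_set Ioi_subset_Ioc_union_Ioi
    _ ≤ (∫⁻ t in Ioc (0:ℝ) r⁻¹, volume {z : Sp | t ≤ f z})
        + ∫⁻ t in Ioi r⁻¹, volume {z : Sp | t ≤ f z} := lintegral_union_le _ _ _
    _ < ∞ := by
        refine ENNReal.add_lt_top.2 ⟨?_, ?_⟩
        · have hb : ∀ t ∈ Ioc (0:ℝ) r⁻¹, volume {z : Sp | t ≤ f z}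
              ≤ volume (closedBall (0:Sp) r) := fun t ht =>
            measure_mono ((key t ht.1).trans inter_subset_left)
          calc ∫⁻ t in Ioc (0:ℝ) r⁻¹, volume {z : Sp | t ≤ f z}
              ≤ ∫⁻ _t in Ioc (0:ℝ) r⁻¹, volume (closedBall (0:Sp) r) :=
                setLIntegral_mono' measurableSet_Ioc hb
            _ = volume (closedBall (0:Sp) r) * volume (Ioc (0:ℝ) r⁻¹) := by
                rw [setLIntegral_const]
            _ < ∞ := ENNReal.mul_lt_top measure_closedBall_lt_top
                (by rw [Real.volume_Ioc]; exact ENNReal.ofReal_lt_top)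
        · have hb : ∀ t ∈ Ioi r⁻¹, volume {z : Sp | t ≤ f z}
              ≤ ENNReal.ofReal (t ^ (-(3:ℝ))) * volume (ball (0:Sp) 1) := by
            intro t ht
            have ht0 : 0 < t := lt_trans (inv_pos.2 hr) ht
            have : volume {z : Sp | t ≤ f z} ≤ volume (closedBall (0:Sp) t⁻¹) :=
              measure_mono ((key t ht0).trans inter_subset_right)
            refine this.trans_eq ?_
            rw [Measure.addHaar_closedBall _ _ (by positivity : (0:ℝ) ≤ t⁻¹), sp_finrank]
            congr 1
            rw [← Real.rpow_natCast t⁻¹ 3, Real.inv_rpow ht0.le, ← Real.rpow_neg ht0.le]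
            norm_num
          calc ∫⁻ t in Ioi r⁻¹, volume {z : Sp | t ≤ f z}
              ≤ ∫⁻ t in Ioi r⁻¹, ENNReal.ofReal (t ^ (-(3:ℝ))) * volume (ball (0:Sp) 1) :=
                setLIntegral_mono' measurableSet_Ioi hb
            _ = (∫⁻ t in Ioi r⁻¹, ENNReal.ofReal (t ^ (-(3:ℝ)))) * volume (ball (0:Sp) 1) :=
                lintegral_mul_const' _ _ measure_ball_lt_top.ne
            _ < ∞ := ENNReal.mul_lt_top
                ((integrableOn_Ioi_rpow_of_lt (by norm_num) (inv_pos.2 hr)).setLIntegral_lt_top)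
                measure_ball_lt_top

lemma D_lower {L : ℝ} (hL : 0 < L) :
    ((volume (closedBall (0:Sp) L)).toReal) ^ 2 / (2 * L) ≤
      dblInt ((closedBall (0:Sp) L).indicator (fun _ => (1:ℝ)))
        ((closedBall (0:Sp) L).indicator (fun _ => (1:ℝ))) := by
  unfold dblInt
  set B := closedBall (0:Sp) L with hB
  set u : Sp → ℝ := B.indicator (fun _ => 1) with hu
  set V := (volume B).toReal with hV
  set w : Sp → ℝ := fun z => (closedBall (0:Sp) (2*L)).indicator (fun _ => (1:ℝ)) z / ‖z‖ with hw
  have hw_int : Integrable w := riesz_integrable (by positivity)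
  have hw_nonneg : ∀ z, 0 ≤ w z := fun z =>
    div_nonneg (Set.indicator_nonneg (fun _ _ => zero_le_one) z) (norm_nonneg z)
  set C := ∫ z, w z with hC
  have hu_nonneg : ∀ z, 0 ≤ u z := fun z => Set.indicator_nonneg (fun _ _ => zero_le_one) z
  have hu_meas : Measurable u := measurable_const.indicator measurableSet_closedBall
  have hu_int : Integrable u := by
    rw [hu, integrable_indicator_iff measurableSet_closedBall]
    exact integrableOn_const measure_closedBall_lt_top.ne
  have hpt : ∀ x ∈ B, ∀ y, u y / ‖x - y‖ ≤ w (y - x) := by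
    intro x hx y
    by_cases hy : y ∈ B
    · have h2L : y - x ∈ closedBall (0:Sp) (2*L) := by
        rw [mem_closedBall_zero_iff]
        calc ‖y - x‖ ≤ ‖y‖ + ‖x‖ := norm_sub_le _ _
          _ ≤ L + L := add_le_add (mem_closedBall_zero_iff.1 hy) (mem_closedBall_zero_iff.1 hx)
          _ = 2 * L := by ring
      rw [hu, hw]
      simp only [Set.indicator_of_mem hy, Set.indicator_of_mem h2L]
      rw [norm_sub_rev]
    · rw [hu]
      simp only [Set.indicator_of_notMem hy, zero_div]
      exact hw_nonneg _
  have hinner : ∀ x ∈ B, Integrable (fun y => u y / ‖x - y‖) := by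
    intro x hx
    refine (hw_int.comp_sub_right x).mono'
      ((hu_meas.div ((measurable_const.sub measurable_id).norm)).aestronglyMeasurable)
      (ae_of_all _ fun y => ?_)
    rw [Real.norm_of_nonneg (div_nonneg (hu_nonneg y) (norm_nonneg _))]
    exact hpt x hx y
  have hinner_bound : ∀ x ∈ B, (∫ y, u y / ‖x - y‖) ≤ C := by
    intro x hx
    calc ∫ y, u y / ‖x - y‖ ≤ ∫ y, w (y - x) :=
          integral_mono (hinner x hx) (hw_int.comp_sub_right x) (hpt x hx)
      _ = C := integral_sub_right_eq_self w x
  set F : Sp × Sp → ℝ := fun p => u p.1 * u p.2 / ‖p.1 - p.2‖ with hF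
  have hF_meas : Measurable F :=
    ((hu_meas.comp measurable_fst).mul (hu_meas.comp measurable_snd)).div
      ((measurable_fst.sub measurable_snd).norm)
  have hF_nonneg : ∀ p, 0 ≤ F p := fun p =>
    div_nonneg (mul_nonneg (hu_nonneg _) (hu_nonneg _)) (norm_nonneg _)
  have hF_int : Integrable F (volume.prod volume) := by
    rw [integrable_prod_iff hF_meas.aestronglyMeasurable]
    constructor
    · refine ae_of_all _ fun x => ?_
      by_cases hx : x ∈ B
      · have heq : (fun y => F (x, y)) = fun y => u y / ‖x - y‖ := by
          funext y
          simp only [hF, hu, Set.indicator_of_mem hx, one_mul]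
        rw [heq]
        exact hinner x hx
      · have heq : (fun y => F (x, y)) = fun _ => (0:ℝ) := by
          funext y
          simp only [hF, hu, Set.indicator_of_notMem hx, zero_mul, zero_div]
        rw [heq]
        exact integrable_zero _ _ _
    · refine Integrable.mono' (hu_int.const_mul C)
        (hF_meas.norm.aestronglyMeasurable.integral_prod_right')
        (ae_of_all _ fun x => ?_)
      rw [Real.norm_of_nonneg (integral_nonneg fun y => norm_nonneg _)]
      by_cases hx : x ∈ B
      · have heq : ∀ y, ‖F (x, y)‖ = u y / ‖x - y‖ := fun y => by
          rw [Real.norm_of_nonneg (hF_nonneg _)]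
          simp only [hF, hu, Set.indicator_of_mem hx, one_mul]
        calc ∫ y, ‖F (x, y)‖ = ∫ y, u y / ‖x - y‖ := by simp_rw [heq]
          _ ≤ C := hinner_bound x hx
          _ = C * u x := by rw [hu, Set.indicator_of_mem hx, mul_one]
      · have heq : ∀ y, ‖F (x, y)‖ = 0 := fun y => by
          simp only [hF, hu, Set.indicator_of_notMem hx, zero_mul, zero_div, norm_zero]
        simp only [heq, integral_zero]
        rw [hu, Set.indicator_of_notMem hx, mul_zero]
  have hdiag : (volume.prod volume) {p : Sp × Sp | p.1 = p.2} = 0 := by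
    rw [Measure.prod_apply (measurableSet_eq_fun measurable_fst measurable_snd)]
    have h1 : ∀ x : Sp, (Prod.mk x ⁻¹' {p : Sp × Sp | p.1 = p.2}) = {x} := by
      intro x; ext y; simp [eq_comm]
    simp only [h1, measure_singleton, lintegral_zero]
  have hne : ∀ᵐ p : Sp × Sp ∂(volume.prod volume), p.1 ≠ p.2 := by
    rw [ae_iff]
    simpa using hdiag
  have hGle : ∀ᵐ p : Sp × Sp ∂(volume.prod volume), u p.1 * u p.2 * (2*L)⁻¹ ≤ F p := by
    filter_upwards [hne] with p hp
    by_cases h1 : p.1 ∈ B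
    · by_cases h2 : p.2 ∈ B
      · have hd : ‖p.1 - p.2‖ ≤ 2 * L := by
          calc ‖p.1 - p.2‖ ≤ ‖p.1‖ + ‖p.2‖ := norm_sub_le _ _
            _ ≤ L + L := add_le_add (mem_closedBall_zero_iff.1 h1) (mem_closedBall_zero_iff.1 h2)
            _ = 2 * L := by ring
        have hdpos : 0 < ‖p.1 - p.2‖ := by
          rw [norm_pos_iff, sub_ne_zero]; exact hp
        simp only [hF, hu, Set.indicator_of_mem h1, Set.indicator_of_mem h2, one_mul]
        rw [div_eq_mul_inv, one_mul]
        exact inv_anti₀ hdpos hd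
      · simp only [hu, Set.indicator_of_notMem h2, mul_zero, zero_mul]
        exact hF_nonneg p
    · simp only [hu, Set.indicator_of_notMem h1, zero_mul]
      exact hF_nonneg p
  have hG_int : Integrable (fun p : Sp × Sp => u p.1 * u p.2 * (2*L)⁻¹) (volume.prod volume) :=
    (hu_int.mul_prod hu_int).mul_const _
  have hu_integral : (∫ z, u z) = V := by
    rw [hu, integral_indicator_const (1:ℝ) measurableSet_closedBall, smul_eq_mul, mul_one, measureReal_def]
  calc V ^ 2 / (2 * L) = (∫ z, u z) * (∫ z, u z) * (2*L)⁻¹ := by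
        rw [hu_integral]; ring
    _ = ∫ p : Sp × Sp, u p.1 * u p.2 * (2*L)⁻¹ ∂(volume.prod volume) := by
        rw [integral_mul_const, integral_prod_mul]
    _ ≤ ∫ p : Sp × Sp, F p ∂(volume.prod volume) := integral_mono_ae hG_int hF_int hGle
    _ = ∫ x : Sp, ∫ y : Sp, u x * u y / ‖x - y‖ := (integral_integral (f := fun x y => u x * u y / ‖x - y‖) hF_int).symm

lemma dblInt_const_mul (c : ℝ) (u : Sp → ℝ) :
    dblInt (fun x => c * u x) (fun x => c * u x) = c ^ 2 * dblInt u u := by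
  unfold dblInt
  have h : ∀ x y : Sp, c * u x * (c * u y) / ‖x - y‖ = c ^ 2 * (u x * u y / ‖x - y‖) := by
    intros; ring
  simp_rw [h, integral_const_mul]

set_option maxHeartbeats 1000000 in
/-- Lemma 4.7: under the strict ratio condition, the minimal energies over `W_R` are
bounded above by a fixed negative constant for all large `R`. -/
theorem stmt8 (ke kp q G me mp : ℝ)
    (hke : 0 < ke) (hkp : 0 < kp) (hq : 0 < q) (hG : 0 < G) (hme : 0 < me) (hmp : 0 < mp)
    (hGp : G * mp ^ 2 < q ^ 2) (hGe : G * me ^ 2 < q ^ 2)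
    (Ne Np : ℝ) (hNe : 0 < Ne) (hNp : 0 < Np)
    (hlow : (1 - G * mp ^ 2 / q ^ 2) / (1 + G * me * mp / q ^ 2) < Ne / Np)
    (hhigh : Ne / Np < (1 + G * me * mp / q ^ 2) / (1 - G * me ^ 2 / q ^ 2)) :
    ∃ e : ℝ, e < 0 ∧ ∃ R₁ : ℝ, 0 < R₁ ∧
      ∀ R : ℝ, R₁ ≤ R → ∀ ρe ρp : Sp → ℝ, InWR Ne Np R ρe ρp →
        (∀ σe σp : Sp → ℝ, InWR Ne Np R σe σp →
          energy ke kp q G me mp ρe ρp ≤ energy ke kp q G me mp σe σp) →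
        energy ke kp q G me mp ρe ρp ≤ e := by
  classical
  have hq2 : (0:ℝ) < q ^ 2 := by positivity
  have hden : (0:ℝ) < 1 + G * me * mp / q ^ 2 := by positivity
  have hden2 : (0:ℝ) < 1 - G * me ^ 2 / q ^ 2 := by
    have : G * me ^ 2 / q ^ 2 < 1 := (div_lt_one hq2).2 hGe
    linarith
  have h1 : (q ^ 2 - G * mp ^ 2) * Np < Ne * (q ^ 2 + G * me * mp) := by
    have h := mul_lt_mul_of_pos_right ((div_lt_div_iff₀ hden hNp).1 hlow) hq2
    have e1 : (1 - G * mp ^ 2 / q ^ 2) * Np * q ^ 2 = (q ^ 2 - G * mp ^ 2) * Np := by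
      field_simp
    have e2 : Ne * (1 + G * me * mp / q ^ 2) * q ^ 2 = Ne * (q ^ 2 + G * me * mp) := by
      field_simp
    rwa [e1, e2] at h
  have h2 : Ne * (q ^ 2 - G * me ^ 2) < (q ^ 2 + G * me * mp) * Np := by
    have h := mul_lt_mul_of_pos_right ((div_lt_div_iff₀ hNp hden2).1 hhigh) hq2
    have e1 : Ne * (1 - G * me ^ 2 / q ^ 2) * q ^ 2 = Ne * (q ^ 2 - G * me ^ 2) := by
      field_simp
    have e2 : (1 + G * me * mp / q ^ 2) * Np * q ^ 2 = (q ^ 2 + G * me * mp) * Np := by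
      field_simp
    rwa [e1, e2] at h
  set S : ℝ := mp * Np + me * Ne with hS_def
  have hS : 0 < S := by positivity
  have h3 : q ^ 2 * (Np - Ne) < G * mp * S := by rw [hS_def]; nlinarith [h1]
  have h4 : q ^ 2 * (Ne - Np) < G * me * S := by rw [hS_def]; nlinarith [h2]
  have key : q ^ 2 * (Np - Ne) ^ 2 < G * S ^ 2 := by
    rcases le_total Ne Np with hd | hd
    · have hsq : (q ^ 2 * (Np - Ne)) ^ 2 < (G * mp * S) ^ 2 := by
        apply sq_lt_sq' _ h3
        have hx : 0 < G * mp * S := by positivity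
        nlinarith [mul_nonneg hq2.le (sub_nonneg.2 hd)]
      have h6 : G * mp ^ 2 * (G * S ^ 2) < q ^ 2 * (G * S ^ 2) :=
        mul_lt_mul_of_pos_right hGp (by positivity)
      have h5 : q ^ 2 * (q ^ 2 * (Np - Ne) ^ 2) < q ^ 2 * (G * S ^ 2) := by
        nlinarith [hsq, h6]
      exact lt_of_mul_lt_mul_left h5 hq2.le
    · have hsq : (q ^ 2 * (Ne - Np)) ^ 2 < (G * me * S) ^ 2 := by
        apply sq_lt_sq' _ h4
        have hx : 0 < G * me * S := by positivity
        nlinarith [mul_nonneg hq2.le (sub_nonneg.2 hd)]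
      have h6 : G * me ^ 2 * (G * S ^ 2) < q ^ 2 * (G * S ^ 2) :=
        mul_lt_mul_of_pos_right hGe (by positivity)
      have h5 : q ^ 2 * (q ^ 2 * (Np - Ne) ^ 2) < q ^ 2 * (G * S ^ 2) := by
        nlinarith [hsq, h6]
      exact lt_of_mul_lt_mul_left h5 hq2.le
  set A₀ : ℝ := q ^ 2 * (Np - Ne) ^ 2 - G * S ^ 2 with hA₀def
  have hA₀ : A₀ < 0 := by rw [hA₀def]; linarith
  set c₁ : ℝ := (volume (Metric.ball (0:Sp) 1)).toReal with hc₁def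
  have hc₁ : 0 < c₁ :=
    ENNReal.toReal_pos (measure_ball_pos volume _ one_pos).ne' measure_ball_lt_top.ne
  set Kk : ℝ := ke * Ne ^ ((5:ℝ)/3) + kp * Np ^ ((5:ℝ)/3) with hKkdef
  have hKk : 0 < Kk := by
    have h1' := Real.rpow_pos_of_pos hNe ((5:ℝ)/3)
    have h2' := Real.rpow_pos_of_pos hNp ((5:ℝ)/3)
    positivity
  set L : ℝ := max 1 (8 * Kk / (c₁ ^ ((2:ℝ)/3) * (-A₀))) with hLdef
  have hL1 : (1:ℝ) ≤ L := le_max_left _ _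
  have hL : (0:ℝ) < L := lt_of_lt_of_le one_pos hL1
  set B := Metric.closedBall (0:Sp) L with hBdef
  set V : ℝ := (volume B).toReal with hVdef
  have hV : 0 < V :=
    ENNReal.toReal_pos (measure_closedBall_pos volume _ hL).ne' measure_closedBall_lt_top.ne
  have hVc : V = L ^ 3 * c₁ := by
    rw [hVdef, hBdef, Measure.addHaar_closedBall _ _ hL.le, sp_finrank, ENNReal.toReal_mul,
      ENNReal.toReal_ofReal (by positivity)]
  set ce : ℝ := Ne / V with hcedef
  set cp : ℝ := Np / V with hcpdef
  have hce : 0 < ce := by positivity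
  have hcp : 0 < cp := by positivity
  refine ⟨A₀ / (8 * L), div_neg_of_neg_of_pos hA₀ (by positivity), max L (max ce cp),
    lt_of_lt_of_le hL (le_max_left _ _), ?_⟩
  intro R hR ρe ρp _hρ hmin
  have hLR : L ≤ R := le_trans (le_max_left _ _) hR
  have hceR : ce ≤ R := le_trans (le_trans (le_max_left _ _) (le_max_right L _)) hR
  have hcpR : cp ≤ R := le_trans (le_trans (le_max_right _ _) (le_max_right L _)) hR
  set σe : Sp → ℝ := B.indicator (fun _ => ce) with hσe
  set σp : Sp → ℝ := B.indicator (fun _ => cp) with hσp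
  have hint : ∀ c : ℝ, Integrable (B.indicator (fun _ : Sp => c)) := by
    intro c
    rw [integrable_indicator_iff (hBdef ▸ measurableSet_closedBall)]
    exact integrableOn_const (by rw [hBdef]; exact measure_closedBall_lt_top.ne)
  have hBint : ∀ c : ℝ, (∫ x : Sp, B.indicator (fun _ : Sp => c) x) = V * c := by
    intro c
    rw [hBdef, integral_indicator_const c measurableSet_closedBall, smul_eq_mul, ← hBdef,
      measureReal_def, ← hVdef]
  have hσW : InWR Ne Np R σe σp := by
    refine ⟨measurable_const.indicator (hBdef ▸ measurableSet_closedBall),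
      measurable_const.indicator (hBdef ▸ measurableSet_closedBall),
      fun x => Set.indicator_nonneg (fun _ _ => hce.le) x,
      fun x => Set.indicator_nonneg (fun _ _ => hcp.le) x,
      ?_, ?_, hint ce, hint cp, ?_, ?_, ?_, ?_, ?_, ?_⟩
    · intro x y h
      simp only [hσe, hBdef, Set.indicator_apply, Metric.mem_closedBall, dist_zero_right, h]
    · intro x y h
      simp only [hσp, hBdef, Set.indicator_apply, Metric.mem_closedBall, dist_zero_right, h]
    · rw [hσe, hBint ce, hcedef, mul_div_cancel₀ _ hV.ne']
    · rw [hσp, hBint cp, hcpdef, mul_div_cancel₀ _ hV.ne']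
    · intro x hx
      apply Set.indicator_of_notMem
      rw [hBdef, Metric.mem_closedBall, dist_zero_right]
      push_neg
      exact lt_of_le_of_lt hLR hx
    · intro x hx
      apply Set.indicator_of_notMem
      rw [hBdef, Metric.mem_closedBall, dist_zero_right]
      push_neg
      exact lt_of_le_of_lt hLR hx
    · refine ae_of_all _ fun x => ?_
      by_cases hx : x ∈ B
      · rw [hσe, Set.indicator_of_mem hx]; exact hceR
      · rw [hσe, Set.indicator_of_notMem hx]
        exact le_trans hce.le hceR
    · refine ae_of_all _ fun x => ?_
      by_cases hx : x ∈ B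
      · rw [hσp, Set.indicator_of_mem hx]; exact hcpR
      · rw [hσp, Set.indicator_of_notMem hx]
        exact le_trans hcp.le hcpR
  refine le_trans (hmin σe σp hσW) ?_
  -- now bound the energy of the trial pair
  set u : Sp → ℝ := B.indicator (fun _ => (1:ℝ)) with hu
  set D : ℝ := dblInt u u with hD_def
  have hD : V ^ 2 / (2 * L) ≤ D := by
    rw [hD_def, hu, hBdef, hVdef, hBdef]
    exact D_lower hL
  have hsub : (fun x => σp x - σe x) = (fun x => (cp - ce) * u x) := by
    funext x
    simp only [hσp, hσe, hu, Set.indicator_apply]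
    split_ifs <;> ring
  have hadd : (fun x => mp * σp x + me * σe x) = (fun x => (mp * cp + me * ce) * u x) := by
    funext x
    simp only [hσp, hσe, hu, Set.indicator_apply]
    split_ifs <;> ring
  have hd1 : dblInt (fun x => σp x - σe x) (fun x => σp x - σe x) = (cp - ce) ^ 2 * D := by
    rw [hsub, dblInt_const_mul, hD_def]
  have hd2 : dblInt (fun x => mp * σp x + me * σe x) (fun x => mp * σp x + me * σe x)
      = (mp * cp + me * ce) ^ 2 * D := by
    rw [hadd, dblInt_const_mul, hD_def]
  have hk_e : (∫ x : Sp, σe x ^ ((5:ℝ)/3)) = ce ^ ((5:ℝ)/3) * V := by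
    have hfe : (fun x : Sp => σe x ^ ((5:ℝ)/3)) = B.indicator (fun _ => ce ^ ((5:ℝ)/3)) := by
      funext x
      simp only [hσe, Set.indicator_apply]
      split_ifs
      · rfl
      · exact Real.zero_rpow (by norm_num)
    rw [hfe, hBdef, integral_indicator_const _ measurableSet_closedBall, smul_eq_mul, measureReal_def, ← hVdef,
      mul_comm]
  have hk_p : (∫ x : Sp, σp x ^ ((5:ℝ)/3)) = cp ^ ((5:ℝ)/3) * V := by
    have hfp : (fun x : Sp => σp x ^ ((5:ℝ)/3)) = B.indicator (fun _ => cp ^ ((5:ℝ)/3)) := by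
      funext x
      simp only [hσp, Set.indicator_apply]
      split_ifs
      · rfl
      · exact Real.zero_rpow (by norm_num)
    rw [hfp, hBdef, integral_indicator_const _ measurableSet_closedBall, smul_eq_mul, measureReal_def, ← hVdef,
      mul_comm]
  have hEval : energy ke kp q G me mp σe σp
      = ke * (ce ^ ((5:ℝ)/3) * V) + kp * (cp ^ ((5:ℝ)/3) * V)
        + q ^ 2 / 2 * ((cp - ce) ^ 2 * D) - G / 2 * ((mp * cp + me * ce) ^ 2 * D) := by
    unfold energy
    rw [hk_e, hk_p, hd1, hd2]
  have hC1 : q ^ 2 / 2 * ((cp - ce) ^ 2 * D) - G / 2 * ((mp * cp + me * ce) ^ 2 * D)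
      = A₀ / (2 * V ^ 2) * D := by
    rw [hA₀def, hS_def, hcedef, hcpdef]
    field_simp
  have hC2 : A₀ / (2 * V ^ 2) * D ≤ A₀ / (4 * L) := by
    have hcoef : A₀ / (2 * V ^ 2) ≤ 0 :=
      div_nonpos_of_nonpos_of_nonneg hA₀.le (by positivity)
    calc A₀ / (2 * V ^ 2) * D ≤ A₀ / (2 * V ^ 2) * (V ^ 2 / (2 * L)) :=
          mul_le_mul_of_nonpos_left hD hcoef
      _ = A₀ / (4 * L) := by field_simp; ring
  have hVpow : V / V ^ ((5:ℝ)/3) = V ^ (-(2:ℝ)/3) := by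
    rw [show (-(2:ℝ)/3) = 1 - (5:ℝ)/3 by norm_num, Real.rpow_sub hV, Real.rpow_one]
  have hkin : ke * (ce ^ ((5:ℝ)/3) * V) + kp * (cp ^ ((5:ℝ)/3) * V)
      = Kk * V ^ (-(2:ℝ)/3) := by
    have hce5 : ce ^ ((5:ℝ)/3) * V = Ne ^ ((5:ℝ)/3) * V ^ (-(2:ℝ)/3) := by
      rw [hcedef, Real.div_rpow hNe.le hV.le, div_mul_eq_mul_div, mul_div_assoc, hVpow]
    have hcp5 : cp ^ ((5:ℝ)/3) * V = Np ^ ((5:ℝ)/3) * V ^ (-(2:ℝ)/3) := by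
      rw [hcpdef, Real.div_rpow hNp.le hV.le, div_mul_eq_mul_div, mul_div_assoc, hVpow]
    rw [hce5, hcp5, hKkdef]
    ring
  have hVpow2 : V ^ (-(2:ℝ)/3) = (c₁ ^ ((2:ℝ)/3))⁻¹ * (L ^ 2)⁻¹ := by
    rw [hVc, Real.mul_rpow (by positivity) hc₁.le]
    have hL3 : (L ^ 3 : ℝ) ^ (-(2:ℝ)/3) = L ^ (-(2:ℝ)) := by
      rw [← Real.rpow_natCast L 3, ← Real.rpow_mul hL.le]
      norm_num
    have hLneg : (L : ℝ) ^ (-(2:ℝ)) = (L ^ 2)⁻¹ := by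
      rw [show (-(2:ℝ)) = -((2:ℕ):ℝ) by norm_num, Real.rpow_neg hL.le, Real.rpow_natCast]
    have hc1neg : (c₁ : ℝ) ^ (-(2:ℝ)/3) = (c₁ ^ ((2:ℝ)/3))⁻¹ := by
      rw [show (-(2:ℝ)/3) = -((2:ℝ)/3) by norm_num, Real.rpow_neg hc₁.le]
    rw [hL3, hLneg, hc1neg]
    ring
  have hkin_le : Kk * V ^ (-(2:ℝ)/3) ≤ -A₀ / (8 * L) := by
    have hc23 : 0 < c₁ ^ ((2:ℝ)/3) := Real.rpow_pos_of_pos hc₁ _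
    have hL0 : 8 * Kk / (c₁ ^ ((2:ℝ)/3) * (-A₀)) ≤ L := le_max_right _ _
    have h8 : 8 * Kk ≤ L * (c₁ ^ ((2:ℝ)/3) * (-A₀)) :=
      (div_le_iff₀ (mul_pos hc23 (neg_pos.2 hA₀))).1 hL0
    rw [hVpow2, le_div_iff₀ (by positivity : (0:ℝ) < 8 * L)]
    have heq : Kk * ((c₁ ^ ((2:ℝ)/3))⁻¹ * (L ^ 2)⁻¹) * (8 * L)
        = (8 * Kk) / (c₁ ^ ((2:ℝ)/3) * L) := by
      field_simp
    rw [heq, div_le_iff₀ (by positivity)]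
    calc 8 * Kk ≤ L * (c₁ ^ ((2:ℝ)/3) * (-A₀)) := h8
      _ = -A₀ * (c₁ ^ ((2:ℝ)/3) * L) := by ring
  have hE2 : energy ke kp q G me mp σe σp = Kk * V ^ (-(2:ℝ)/3) + A₀ / (2 * V ^ 2) * D := by
    rw [hEval]
    linarith [hkin, hC1]
  rw [hE2]
  have : -A₀ / (8 * L) + A₀ / (4 * L) = A₀ / (8 * L) := by
    field_simp
    ring
  linarith [hkin_le, hC2]
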